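/- arXiv:2406.01991 — 6 statements merged into one kernel-verified Lean document; each statement's English description precedes it below -/
import Mathlib

section
/- Let P be an idempotent n×n real matrix, Q = I − P, L an n×n real matrix, and u₀ ∈ ℝⁿ. Define the noise term N(τ) = exp(τ·QL)·Q·L·u₀ and the memory kernel M(τ) = P·L·N(τ). Then for every τ ∈ ℝ: N(τ) = exp(τL)·N(0) − ∫_0^τ exp((τ−s)L)·M(s) ds. -/
open MeasureTheory intervalIntegral

section Aux

open NormedSpace

attribute [local instance] Matrix.linftyOpNormedRing Matrix.linftyOpNormedAlgebra

/-- The continuous linear map `A ↦ A.mulVec u₀`. -/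
noncomputable def mulVecApplyCLM {n : ℕ} (u₀ : Fin n → ℝ) :
    Matrix (Fin n) (Fin n) ℝ →L[ℝ] (Fin n → ℝ) :=
  LinearMap.toContinuousLinearMap
    { toFun := fun A => A.mulVec u₀
      map_add' := fun A B => Matrix.add_mulVec A B u₀
      map_smul' := fun c A => Matrix.smul_mulVec c A u₀ }

lemma mulVecApplyCLM_apply {n : ℕ} (u₀ : Fin n → ℝ) (A : Matrix (Fin n) (Fin n) ℝ) :
    mulVecApplyCLM u₀ A = A.mulVec u₀ := rfl

lemma alg_aux {R : Type*} [Ring R] (E1 E2 L PL A : R) (hc : E2 * A = A * E2)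
    (hA : A - L = -PL) : -(E1 * L) * E2 + E1 * (E2 * A) = -(E1 * PL * E2) := by
  have hPL : PL = L - A := by rw [← neg_neg PL, ← hA, neg_sub]
  rw [hc, hPL]
  noncomm_ring

lemma aux_key {n : ℕ} (P Q L : Matrix (Fin n) (Fin n) ℝ)
    (hQ : Q = 1 - P) (u₀ : Fin n → ℝ) (τ : ℝ) :
    (exp (τ • (Q * L)) * Q * L).mulVec u₀ =
      (exp (τ • L)).mulVec ((exp ((0:ℝ) • (Q * L)) * Q * L).mulVec u₀) -
        ∫ s in (0:ℝ)..τ,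
          (exp ((τ - s) • L)).mulVec
            ((P * L).mulVec ((exp (s • (Q * L)) * Q * L).mulVec u₀)) := by
  set A₀ : Matrix (Fin n) (Fin n) ℝ := Q * L with hA₀
  set w : Fin n → ℝ := A₀.mulVec u₀ with hw
  set φ := mulVecApplyCLM w with hφ
  set g : ℝ → Matrix (Fin n) (Fin n) ℝ :=
    fun s => exp ((τ - s) • L) * exp (s • A₀) with hg
  set D : ℝ → Matrix (Fin n) (Fin n) ℝ :=
    fun s => -(exp ((τ - s) • L) * (P * L) * exp (s • A₀)) with hD
  have hcomm : ∀ s : ℝ, exp (s • A₀) * A₀ = A₀ * exp (s • A₀) := fun s =>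
    (((Commute.refl A₀).smul_left s).exp_left)
  have hAL : A₀ - L = -(P * L) := by rw [hA₀, hQ]; noncomm_ring
  have hder : ∀ s : ℝ, HasDerivAt g (D s) s := by
    intro s
    have h1 : HasDerivAt (fun u : ℝ => exp (u • L)) (exp ((τ - s) • L) * L) (τ - s) :=
      hasDerivAt_exp_smul_const L (τ - s)
    have h1' : HasDerivAt (fun u : ℝ => τ - u) (-1 : ℝ) s := by
      simpa using (hasDerivAt_id s).const_sub τ
    have h1'' : HasDerivAt (fun u : ℝ => exp ((τ - u) • L))
        (-(exp ((τ - s) • L) * L)) s := by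
      have := h1.scomp s h1'
      simp only [neg_one_smul] at this
      exact this
    have h2 : HasDerivAt (fun u : ℝ => exp (u • A₀)) (exp (s • A₀) * A₀) s :=
      hasDerivAt_exp_smul_const A₀ s
    have h3 := h1''.mul h2
    rw [hD]
    exact h3.congr_deriv (alg_aux (exp ((τ - s) • L)) (exp (s • A₀)) L (P * L) A₀ (hcomm s) hAL)
  have hvder : ∀ s : ℝ, HasDerivAt (fun u => φ (g u)) (φ (D s)) s := fun s =>
    (φ.hasFDerivAt.comp_hasDerivAt s (hder s))
  have hcontD : Continuous fun s => φ (D s) := by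
    apply φ.continuous.comp
    apply Continuous.neg
    exact ((exp_continuous.comp ((continuous_const.sub continuous_id).smul
      continuous_const)).mul continuous_const).mul
      (exp_continuous.comp (continuous_id.smul continuous_const))
  have hFTC : ∫ s in (0:ℝ)..τ, φ (D s) = φ (g τ) - φ (g 0) :=
    intervalIntegral.integral_eq_sub_of_hasDerivAt (fun s _ => hvder s)
      (hcontD.intervalIntegrable 0 τ)
  have hvec : ∀ s : ℝ, (exp (s • (Q * L)) * Q * L).mulVec u₀ =
      (exp (s • A₀)).mulVec w := by
    intro s
    rw [hw, Matrix.mulVec_mulVec, ← hA₀, mul_assoc]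
  have hDs : ∀ s : ℝ, φ (D s) =
      -((exp ((τ - s) • L)).mulVec
        ((P * L).mulVec ((exp (s • (Q * L)) * Q * L).mulVec u₀))) := by
    intro s
    rw [hvec s, hφ, hD, mulVecApplyCLM_apply, Matrix.neg_mulVec]
    congr 1
    simp [hw, Matrix.mulVec_mulVec, mul_assoc]
  have hgτ : φ (g τ) = (exp (τ • (Q * L)) * Q * L).mulVec u₀ := by
    rw [hvec τ, hφ, hg, mulVecApplyCLM_apply]
    simp
  have hg0 : φ (g 0) =
      (exp (τ • L)).mulVec ((exp ((0:ℝ) • (Q * L)) * Q * L).mulVec u₀) := by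
    rw [hvec 0, hφ, hg, mulVecApplyCLM_apply, Matrix.mulVec_mulVec]
    simp [hw, Matrix.mulVec_mulVec, mul_assoc]
  rw [hgτ, hg0] at hFTC
  have hint : (∫ s in (0:ℝ)..τ,
      (exp ((τ - s) • L)).mulVec
        ((P * L).mulVec ((exp (s • (Q * L)) * Q * L).mulVec u₀)))
      = -∫ s in (0:ℝ)..τ, φ (D s) := by
    rw [← intervalIntegral.integral_neg]
    congr 1
    ext s
    rw [hDs s, neg_neg]
  rw [hint, hFTC]
  abel

end Aux

/-- For an idempotent real `n × n` matrix `P`, `Q = I - P`, a real `n × n` matrix `L` and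
`u₀ ∈ ℝⁿ`, the noise term `N τ = exp (τ Q L) Q L u₀` and the memory kernel
`M τ = P L N τ` of the Mori–Zwanzig decomposition satisfy
`N τ = exp (τ L) N 0 - ∫_0^τ exp ((τ - s) L) M s ds` for every `τ`. -/
theorem noise_term_integral_identity {n : ℕ} (P Q L : Matrix (Fin n) (Fin n) ℝ)
    (hP : P * P = P) (hQ : Q = 1 - P) (u₀ : Fin n → ℝ)
    (N M : ℝ → Fin n → ℝ)
    (hN : ∀ τ : ℝ, N τ = (NormedSpace.exp (τ • (Q * L)) * Q * L).mulVec u₀)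
    (hM : ∀ τ : ℝ, M τ = (P * L).mulVec (N τ)) :
    ∀ τ : ℝ,
      N τ = (NormedSpace.exp (τ • L)).mulVec (N 0) -
        ∫ s in (0:ℝ)..τ, (NormedSpace.exp ((τ - s) • L)).mulVec (M s) := by
  intro τ
  simp only [hN, hM]
  exact aux_key P Q L hQ u₀ τ
end

section
/- Let P be an idempotent n×n real matrix, Q = I − P, L an n×n real matrix, and u₀ ∈ ℝⁿ. The memory kernel M(τ) = P·L·exp(τ·QL)·Q·L·u₀ satisfies the Volterra integral equation: M(τ) + ∫_0^τ P·exp((τ−s)L)·L·M(s) ds = P·exp(τL)·L·Q·L·u₀ for all τ ∈ ℝ. -/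
open MeasureTheory intervalIntegral

/-- **Volterra integral equation for the memory kernel**: for an idempotent real `n × n`
matrix `P`, `Q = I - P`, a real `n × n` matrix `L` and `u₀ ∈ ℝⁿ`, the memory kernel
`M τ = P L exp (τ Q L) Q L u₀` of the Mori–Zwanzig decomposition satisfies
`M τ + ∫_0^τ P exp ((τ - s) L) L (M s) ds = P exp (τ L) L Q L u₀` for all `τ`. -/
theorem memory_kernel_volterra_equation {n : ℕ} (P Q L : Matrix (Fin n) (Fin n) ℝ)
    (hP : P * P = P) (hQ : Q = 1 - P) (u₀ : Fin n → ℝ)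
    (M : ℝ → Fin n → ℝ)
    (hM : ∀ τ : ℝ, M τ = (P * L * NormedSpace.exp (τ • (Q * L)) * Q * L).mulVec u₀) :
    ∀ τ : ℝ,
      M τ + (∫ s in (0:ℝ)..τ, (P * NormedSpace.exp ((τ - s) • L) * L).mulVec (M s)) =
        (P * NormedSpace.exp (τ • L) * L * Q * L).mulVec u₀ := by
  intro τ
  letI : SeminormedRing (Matrix (Fin n) (Fin n) ℝ) := Matrix.linftyOpSemiNormedRing
  letI : NormedRing (Matrix (Fin n) (Fin n) ℝ) := Matrix.linftyOpNormedRing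
  letI : NormedAlgebra ℝ (Matrix (Fin n) (Fin n) ℝ) := Matrix.linftyOpNormedAlgebra
  -- the continuous linear map  A ↦ (P * A * (Q * L)) *ᵥ u₀
  let ψlin : Matrix (Fin n) (Fin n) ℝ →ₗ[ℝ] (Fin n → ℝ) :=
    { toFun := fun A => (P * A * (Q * L)).mulVec u₀
      map_add' := by
        intro A B
        simp [Matrix.mul_add, Matrix.add_mul, Matrix.add_mulVec]
      map_smul' := by
        intro c A
        simp [Matrix.mul_smul, Matrix.smul_mul, Matrix.smul_mulVec] }
  let ψ : Matrix (Fin n) (Fin n) ℝ →L[ℝ] (Fin n → ℝ) := ψlin.toContinuousLinearMap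
  have hψ : ∀ A, ψ A = (P * A * (Q * L)).mulVec u₀ := fun A => rfl
  set E₁ : ℝ → Matrix (Fin n) (Fin n) ℝ := fun s => NormedSpace.exp ((τ - s) • L) with hE₁def
  set E₂ : ℝ → Matrix (Fin n) (Fin n) ℝ := fun s => NormedSpace.exp (s • (Q * L)) with hE₂def
  -- derivatives of the exponentials
  have hE₁ : ∀ s : ℝ, HasDerivAt E₁ (-(L * E₁ s)) s := by
    intro s
    have h1 : HasDerivAt (fun u : ℝ => NormedSpace.exp (u • L))
        (L * NormedSpace.exp ((τ - s) • L)) (τ - s) :=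
      hasDerivAt_exp_smul_const' L (τ - s)
    have h2 : HasDerivAt (fun s : ℝ => τ - s) (-1) s := by
      simpa using (hasDerivAt_id s).const_sub τ
    have := h1.scomp s h2
    simp only [Function.comp_def, neg_smul, one_smul] at this
    exact this
  have hE₂ : ∀ s : ℝ, HasDerivAt E₂ ((Q * L) * E₂ s) s := fun s =>
    hasDerivAt_exp_smul_const' (Q * L) s
  -- commutation of L with E₁
  have hcomm : ∀ s : ℝ, L * E₁ s = E₁ s * L := by
    intro s
    exact (((Commute.refl L).smul_right (τ - s)).exp_right)
  -- derivative of the product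
  have hprod : ∀ s : ℝ, HasDerivAt (fun s => E₁ s * (L * E₂ s))
      (-(E₁ s * (L * (P * (L * E₂ s))))) s := by
    intro s
    have h := (hE₁ s).mul ((hE₂ s).const_mul L)
    have heq : -(L * E₁ s) * (L * E₂ s) + E₁ s * (L * ((Q * L) * E₂ s))
        = -(E₁ s * (L * (P * (L * E₂ s)))) := by
      rw [hcomm s, hQ]
      noncomm_ring
    rw [heq] at h
    exact h
  -- derivative of the composed vector-valued function
  have hf : ∀ s : ℝ, HasDerivAt (fun s => ψ (E₁ s * (L * E₂ s)))
      (ψ (-(E₁ s * (L * (P * (L * E₂ s)))))) s := fun s =>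
    (ψ.hasFDerivAt).comp_hasDerivAt s (hprod s)
  -- continuity of the derivative
  have hexpc : ∀ A : Matrix (Fin n) (Fin n) ℝ,
      Continuous fun s : ℝ => NormedSpace.exp (s • A) := by
    intro A
    exact continuous_iff_continuousAt.2 fun s => (hasDerivAt_exp_smul_const' A s).continuousAt
  have hE₁c : Continuous E₁ :=
    continuous_iff_continuousAt.2 fun s => (hE₁ s).continuousAt
  have hE₂c : Continuous E₂ :=
    continuous_iff_continuousAt.2 fun s => (hE₂ s).continuousAt
  have hderivc : Continuous fun s => ψ (-(E₁ s * (L * (P * (L * E₂ s))))) :=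
    ψ.continuous.comp
      ((hE₁c.mul (continuous_const.mul (continuous_const.mul
        (continuous_const.mul hE₂c)))).neg)
  have hint : IntervalIntegrable (fun s => ψ (-(E₁ s * (L * (P * (L * E₂ s)))))) volume 0 τ :=
    hderivc.intervalIntegrable 0 τ
  -- fundamental theorem of calculus
  have key : (∫ s in (0:ℝ)..τ, ψ (-(E₁ s * (L * (P * (L * E₂ s))))))
      = ψ (E₁ τ * (L * E₂ τ)) - ψ (E₁ 0 * (L * E₂ 0)) :=
    integral_eq_sub_of_hasDerivAt (fun s _ => hf s) hint
  -- identify the integrand with the goal's integrand, up to sign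
  have hintegrand : ∀ s : ℝ, (P * NormedSpace.exp ((τ - s) • L) * L).mulVec (M s)
      = -(ψ (-(E₁ s * (L * (P * (L * E₂ s)))))) := by
    intro s
    rw [hM s, Matrix.mulVec_mulVec, hψ, mul_neg, neg_mul, Matrix.neg_mulVec, neg_neg]
    congr 1
    simp only [hE₁def, hE₂def]
    noncomm_ring
  have hint2 : (∫ s in (0:ℝ)..τ, (P * NormedSpace.exp ((τ - s) • L) * L).mulVec (M s))
      = ψ (E₁ 0 * (L * E₂ 0)) - ψ (E₁ τ * (L * E₂ τ)) := by
    rw [intervalIntegral.integral_congr (g := fun s => -(ψ (-(E₁ s * (L * (P * (L * E₂ s)))))))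
      (fun s _ => hintegrand s), intervalIntegral.integral_neg, key]
    abel
  -- evaluate the endpoints
  have e1 : E₁ τ = 1 := by
    rw [hE₁def]
    simp only [sub_self, zero_smul]
    exact NormedSpace.exp_zero
  have e2 : E₂ 0 = 1 := by
    rw [hE₂def]
    simp only [zero_smul]
    exact NormedSpace.exp_zero
  have hF0 : ψ (E₁ 0 * (L * E₂ 0)) = (P * NormedSpace.exp (τ • L) * L * Q * L).mulVec u₀ := by
    rw [hψ, e2, mul_one]
    congr 1
    simp only [hE₁def, sub_zero]
    noncomm_ring
  have hFτ : ψ (E₁ τ * (L * E₂ τ)) = M τ := by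
    rw [hψ, e1, one_mul, hM τ]
    congr 1
    simp only [hE₂def]
    noncomm_ring
  rw [hint2, hF0, hFτ]
  abel
end

section
/- Let P be an idempotent n×n real matrix, Q = I − P, and L an n×n real matrix. Then the Mori–Zwanzig decomposition holds as a matrix identity for every t ∈ ℝ: P·L·exp(tL) = P·exp(tL)·P·L + P·exp(t·QL)·Q·L + ∫_0^t P·exp((t−τ)L)·P·L·exp(τ·QL)·Q·L dτ. -/
open MeasureTheory intervalIntegral

attribute [local instance] Matrix.linftyOpNormedAddCommGroup Matrix.linftyOpNormedSpace

attribute [local instance] Matrix.linftyOpNormedRing Matrix.linftyOpNormedAlgebra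

section Aux

variable {n : ℕ}

local notation "M" => Matrix (Fin n) (Fin n) ℝ

lemma exp_cont (A : M) : Continuous fun τ : ℝ => NormedSpace.exp (τ • A) :=
  NormedSpace.exp_continuous.comp (continuous_id.smul continuous_const)

lemma dyson (P Q L : Matrix (Fin n) (Fin n) ℝ) (hQ : Q = 1 - P) (t : ℝ) :
    NormedSpace.exp (t • L) = NormedSpace.exp (t • (Q * L)) +
      ∫ τ in (0:ℝ)..t, NormedSpace.exp ((t - τ) • L) * (P * L) *
        NormedSpace.exp (τ • (Q * L)) := by
  set f : ℝ → M := fun τ =>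
    NormedSpace.exp ((t - τ) • L) * NormedSpace.exp (τ • (Q * L)) with hf
  have hderiv : ∀ τ ∈ Set.uIcc (0:ℝ) t, HasDerivAt f
      (-(NormedSpace.exp ((t - τ) • L) * (P * L) *
        NormedSpace.exp (τ • (Q * L)))) τ := by
    intro τ _
    have h1 : HasDerivAt (fun τ : ℝ => NormedSpace.exp ((t - τ) • L))
        ((-1 : ℝ) • (NormedSpace.exp ((t - τ) • L) * L)) τ := by
      have hinner : HasDerivAt (fun τ : ℝ => t - τ) (-1 : ℝ) τ :=
        (hasDerivAt_id τ).const_sub t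
      exact (hasDerivAt_exp_smul_const L (t - τ)).scomp τ hinner
    have h2 : HasDerivAt (fun τ : ℝ => NormedSpace.exp (τ • (Q * L)))
        ((Q * L) * NormedSpace.exp (τ • (Q * L))) τ :=
      hasDerivAt_exp_smul_const' (Q * L) τ
    have := h1.mul h2
    convert this using 1
    · rfl
    · rfl
    · rfl
    · rfl
    have hPL : P * L = L - Q * L := by rw [hQ]; noncomm_ring
    rw [hPL]
    simp only [neg_one_smul]
    noncomm_ring
  have hcont : Continuous fun τ : ℝ => NormedSpace.exp ((t - τ) • L) * (P * L) *
      NormedSpace.exp (τ • (Q * L)) := by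
    exact ((NormedSpace.exp_continuous.comp
      ((continuous_const.sub continuous_id).smul continuous_const)).mul
        continuous_const).mul (exp_cont (Q * L))
  have hint := hcont.neg.intervalIntegrable (μ := volume) 0 t
  have key := intervalIntegral.integral_eq_sub_of_hasDerivAt hderiv hint
  have hf0 : f 0 = NormedSpace.exp (t • L) := by
    simp [hf, NormedSpace.exp_zero]
  have hft : f t = NormedSpace.exp (t • (Q * L)) := by
    simp [hf, NormedSpace.exp_zero]
  rw [intervalIntegral.integral_neg, hf0, hft] at key
  rw [neg_eq_iff_eq_neg.mp key, neg_sub]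
  abel

end Aux

/-- **Mori–Zwanzig decomposition** as a matrix identity: for an idempotent real `n × n`
matrix `P`, `Q = I - P`, and a real `n × n` matrix `L`, for every `t : ℝ`,
`P L exp (t L) = P exp (t L) P L + P exp (t Q L) Q L
  + ∫_0^t P exp ((t - τ) L) P L exp (τ Q L) Q L dτ`. -/
theorem mori_zwanzig_decomposition {n : ℕ} (P Q L : Matrix (Fin n) (Fin n) ℝ)
    (hP : P * P = P) (hQ : Q = 1 - P) (t : ℝ) :
    P * L * NormedSpace.exp (t • L) =
      P * NormedSpace.exp (t • L) * P * L +
        P * NormedSpace.exp (t • (Q * L)) * Q * L +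
          ∫ τ in (0:ℝ)..t,
            P * NormedSpace.exp ((t - τ) • L) * P * L *
              NormedSpace.exp (τ • (Q * L)) * Q * L := by
  have hcomm : NormedSpace.exp (t • L) * L = L * NormedSpace.exp (t • L) :=
    (((Commute.refl L).smul_left t).exp_left).eq
  have hPQL : P * L + Q * L = L := by rw [hQ]; noncomm_ring
  have hdyson := dyson P Q L hQ t
  set I := ∫ τ in (0:ℝ)..t, NormedSpace.exp ((t - τ) • L) * (P * L) *
      NormedSpace.exp (τ • (Q * L)) with hI
  -- interchange integral and multiplication
  have hcont : Continuous fun τ : ℝ => NormedSpace.exp ((t - τ) • L) * (P * L) *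
      NormedSpace.exp (τ • (Q * L)) :=
    ((NormedSpace.exp_continuous.comp
      ((continuous_const.sub continuous_id).smul continuous_const)).mul
        continuous_const).mul (exp_cont (Q * L))
  set T : Matrix (Fin n) (Fin n) ℝ →L[ℝ] Matrix (Fin n) (Fin n) ℝ :=
    (ContinuousLinearMap.mul ℝ (Matrix (Fin n) (Fin n) ℝ) P).comp
      ((ContinuousLinearMap.mul ℝ (Matrix (Fin n) (Fin n) ℝ)).flip (Q * L)) with hT
  have hTapply : ∀ X, T X = P * (X * (Q * L)) := fun X => rfl
  have hswap : (∫ τ in (0:ℝ)..t, T (NormedSpace.exp ((t - τ) • L) * (P * L) *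
      NormedSpace.exp (τ • (Q * L)))) = T I :=
    T.intervalIntegral_comp_comm (hcont.intervalIntegrable _ _)
  have hIQL : P * (I * (Q * L)) =
      ∫ τ in (0:ℝ)..t, P * NormedSpace.exp ((t - τ) • L) * P * L *
        NormedSpace.exp (τ • (Q * L)) * Q * L := by
    rw [← hTapply, ← hswap]
    apply intervalIntegral.integral_congr
    intro τ _
    simp only [hTapply]
    noncomm_ring
  calc P * L * NormedSpace.exp (t • L)
      = P * (NormedSpace.exp (t • L) * L) := by rw [mul_assoc, hcomm]
    _ = P * (NormedSpace.exp (t • L) * (P * L))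
        + P * (NormedSpace.exp (t • L) * (Q * L)) := by
        have h : NormedSpace.exp (t • L) * L =
            NormedSpace.exp (t • L) * (P * L) + NormedSpace.exp (t • L) * (Q * L) := by
          rw [← mul_add, hPQL]
        rw [h, mul_add]
    _ = P * (NormedSpace.exp (t • L) * (P * L))
        + P * ((NormedSpace.exp (t • (Q * L)) + I) * (Q * L)) := by rw [← hdyson]
    _ = P * NormedSpace.exp (t • L) * P * L +
        P * NormedSpace.exp (t • (Q * L)) * Q * L + P * (I * (Q * L)) := by
        noncomm_ring
    _ = _ := by rw [hIQL]
end

section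
/- Let E, F be real normed vector spaces, h : E → E, and u : ℝ × E → F a Fréchet differentiable solution of the Liouville equation with control: ∂u/∂t(t, z) = D_z u(t, z)[h(z)] for all (t, z), with initial datum u(0, ·) = u₀. Let Φ : ℝ → E → E satisfy Φ(0, z) = z and, for each z, s ↦ Φ(s, z) has derivative h(Φ(s, z)) at every s. Then the solution is given along characteristics by the representation formula u(t, z) = u₀(Φ(t, z)) for all t and z. In particular, if u₀(z) = z then u(t, z) = Φ(t, z), i.e., the Liouville equation with control is equivalent to the Cauchy problem for the Langevin equation dΦ/dt = h(Φ), Φ(0) = z. -/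
lemma liouville_aux
    {E F : Type*} [NormedAddCommGroup E] [NormedSpace ℝ E]
    [NormedAddCommGroup F] [NormedSpace ℝ F]
    (h : E → E) (u : ℝ × E → F) (u₀ : E → F)
    (hu : Differentiable ℝ u)
    (hliouville : ∀ (t : ℝ) (z : E),
      deriv (fun s : ℝ => u (s, z)) t = fderiv ℝ (fun w : E => u (t, w)) z (h z))
    (hinit : ∀ z : E, u (0, z) = u₀ z)
    (Φ : ℝ → E → E)
    (hΦ0 : ∀ z : E, Φ 0 z = z)
    (hΦ : ∀ (z : E) (s : ℝ), HasDerivAt (fun s : ℝ => Φ s z) (h (Φ s z)) s)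
    (t : ℝ) (z : E) : u (t, z) = u₀ (Φ t z) := by
  set g : ℝ → F := fun s => u (t - s, Φ s z) with hg
  have key : ∀ s : ℝ, HasDerivAt g 0 s := by
    intro s
    set p : ℝ × E := (t - s, Φ s z) with hp
    have hU : HasFDerivAt u (fderiv ℝ u p) p := (hu p).hasFDerivAt
    have hc : HasDerivAt (fun s : ℝ => ((t - s : ℝ), Φ s z)) ((-1 : ℝ), h (Φ s z)) s := by
      exact HasDerivAt.prodMk ((hasDerivAt_id s).const_sub t) (hΦ z s)
    have hcomp : HasDerivAt g (fderiv ℝ u p ((-1 : ℝ), h (Φ s z))) s :=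
      hU.comp_hasDerivAt s hc
    -- partial derivatives
    have h1 : ∀ (q : ℝ × E), fderiv ℝ u q ((1 : ℝ), (0 : E))
        = deriv (fun s : ℝ => u (s, q.2)) q.1 := by
      intro q
      have hcq : HasDerivAt (fun s : ℝ => (s, q.2)) ((1 : ℝ), (0 : E)) q.1 :=
        HasDerivAt.prodMk (hasDerivAt_id q.1) (hasDerivAt_const q.1 q.2)
      have : HasDerivAt (fun s : ℝ => u (s, q.2)) (fderiv ℝ u (q.1, q.2) ((1 : ℝ), (0 : E))) q.1 :=
        (hu (q.1, q.2)).hasFDerivAt.comp_hasDerivAt q.1 hcq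
      simpa using this.deriv.symm
    have h2 : ∀ (q : ℝ × E) (w : E), fderiv ℝ u q ((0 : ℝ), w)
        = fderiv ℝ (fun w : E => u (q.1, w)) q.2 w := by
      intro q w
      have hcq : HasFDerivAt (fun w : E => ((q.1 : ℝ), w))
          (ContinuousLinearMap.inr ℝ ℝ E) q.2 :=
        HasFDerivAt.prodMk (hasFDerivAt_const q.1 q.2) (hasFDerivAt_id q.2)
      have : HasFDerivAt (fun w : E => u (q.1, w))
          ((fderiv ℝ u (q.1, q.2)).comp (ContinuousLinearMap.inr ℝ ℝ E)) q.2 :=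
        ((hu (q.1, q.2)).hasFDerivAt).comp q.2 hcq
      rw [this.fderiv]
      rfl
    have hz : fderiv ℝ u p ((1 : ℝ), (0 : E)) = fderiv ℝ u p ((0 : ℝ), h (Φ s z)) := by
      rw [h1 p, h2 p]
      exact hliouville (t - s) (Φ s z)
    have hsplit : ((-1 : ℝ), h (Φ s z)) = -((1 : ℝ), (0 : E)) + ((0 : ℝ), h (Φ s z)) := by
      simp [Prod.ext_iff]
    have : fderiv ℝ u p ((-1 : ℝ), h (Φ s z)) = 0 := by
      rw [hsplit, map_add, map_neg, hz]
      abel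
    rwa [this] at hcomp
  have hconst : g t = g 0 :=
    is_const_of_deriv_eq_zero (fun s => (key s).differentiableAt)
      (fun s => (key s).deriv) t 0
  have : u (0, Φ t z) = u (t, z) := by simpa [g, hΦ0 z] using hconst
  rw [← this, hinit]

/-- **Representation along characteristics**: if `u : ℝ × E → F` is a Fréchet differentiable
solution of the Liouville equation with control `∂u/∂t (t, z) = D_z u (t, z) [h z]` with
initial datum `u (0, ·) = u₀`, and `Φ` satisfies `Φ 0 z = z` and `∂Φ/∂s (s, z) = h (Φ s z)`,
then `u (t, z) = u₀ (Φ t z)`. In particular, for a solution `v : ℝ × E → E` with initial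
datum `v (0, z) = z`, one has `v (t, z) = Φ t z`: the Liouville equation with control is
equivalent to the Cauchy problem for the Langevin equation `dΦ/dt = h (Φ)`, `Φ 0 = z`. -/
theorem liouville_solution_representation_formula
    {E F : Type*} [NormedAddCommGroup E] [NormedSpace ℝ E]
    [NormedAddCommGroup F] [NormedSpace ℝ F]
    (h : E → E) (u : ℝ × E → F) (u₀ : E → F)
    (hu : Differentiable ℝ u)
    (hliouville : ∀ (t : ℝ) (z : E),
      deriv (fun s : ℝ => u (s, z)) t = fderiv ℝ (fun w : E => u (t, w)) z (h z))
    (hinit : ∀ z : E, u (0, z) = u₀ z)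
    (Φ : ℝ → E → E)
    (hΦ0 : ∀ z : E, Φ 0 z = z)
    (hΦ : ∀ (z : E) (s : ℝ), HasDerivAt (fun s : ℝ => Φ s z) (h (Φ s z)) s)
    (v : ℝ × E → E)
    (hv : Differentiable ℝ v)
    (hliouville' : ∀ (t : ℝ) (z : E),
      deriv (fun s : ℝ => v (s, z)) t = fderiv ℝ (fun w : E => v (t, w)) z (h z))
    (hinit' : ∀ z : E, v (0, z) = z) :
    (∀ (t : ℝ) (z : E), u (t, z) = u₀ (Φ t z)) ∧
      ∀ (t : ℝ) (z : E), v (t, z) = Φ t z := by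
  refine ⟨fun t z => liouville_aux h u u₀ hu hliouville hinit Φ hΦ0 hΦ t z, fun t z => ?_⟩
  exact liouville_aux h v id hv hliouville' hinit' Φ hΦ0 hΦ t z
end

section
/- Let Λ be a real n×n matrix and Δτ > 0 a step size such that I + (Δτ/2)Λ is invertible, and let M̂₀ ∈ ℝⁿ. Define M̂_n = exp(n·Δτ·Λ)·M(Λ)^n·M̂₀ for n ≥ 0. Then this sequence satisfies the discretized Volterra memory equation: for every integer n ≥ 1, M̂_n = (I + (Δτ/2)Λ)⁻¹·( exp(n·Δτ·Λ)·(I − (Δτ/2)Λ)·M̂₀ − Δτ·Λ·Σ_{k=1}^{n−1} exp((n−k)·Δτ·Λ)·M̂_k ). -/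
/-- The sequence `M̂ₙ = exp (n Δτ Λ) (M Λ)^n M̂₀`, where
`M Λ = I - Δτ Λ (I + (Δτ/2) Λ)⁻¹`, satisfies the discretized Volterra memory equation
(the trapezoidal-rule discretization of the Mori–Zwanzig memory kernel equation):
for every `n ≥ 1`,
`M̂ₙ = (I + (Δτ/2) Λ)⁻¹ (exp (n Δτ Λ) (I - (Δτ/2) Λ) M̂₀
        - Δτ Λ ∑_{k=1}^{n-1} exp ((n - k) Δτ Λ) M̂ₖ)`. -/
theorem explicit_sequence_satisfies_discretized_volterra {d : ℕ}
    (Λ : Matrix (Fin d) (Fin d) ℝ) (Δτ : ℝ) (hΔτ : 0 < Δτ)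
    (hinv : IsUnit ((1 : Matrix (Fin d) (Fin d) ℝ) + (Δτ / 2) • Λ))
    (M : Matrix (Fin d) (Fin d) ℝ)
    (hM : M = (1 : Matrix (Fin d) (Fin d) ℝ) -
        Δτ • (Λ * ((1 : Matrix (Fin d) (Fin d) ℝ) + (Δτ / 2) • Λ)⁻¹))
    (M₀ : Fin d → ℝ) (Mhat : ℕ → Fin d → ℝ)
    (hMhat : ∀ n : ℕ,
      Mhat n = (NormedSpace.exp (((n : ℝ) * Δτ) • Λ) * M ^ n).mulVec M₀) :
    ∀ n : ℕ, 1 ≤ n →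
      Mhat n =
        (((1 : Matrix (Fin d) (Fin d) ℝ) + (Δτ / 2) • Λ)⁻¹).mulVec
          ((NormedSpace.exp (((n : ℝ) * Δτ) • Λ) *
              ((1 : Matrix (Fin d) (Fin d) ℝ) - (Δτ / 2) • Λ)).mulVec M₀ -
            Δτ • Λ.mulVec
              (∑ k ∈ Finset.Ico 1 n,
                (NormedSpace.exp ((((n : ℝ) - (k : ℝ)) * Δτ) • Λ)).mulVec (Mhat k))) := by
  intro n hn
  set A : Matrix (Fin d) (Fin d) ℝ := (1 : Matrix (Fin d) (Fin d) ℝ) + (Δτ / 2) • Λ with hA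
  set B : Matrix (Fin d) (Fin d) ℝ := (1 : Matrix (Fin d) (Fin d) ℝ) - (Δτ / 2) • Λ with hB
  have hdet : IsUnit A.det := (Matrix.isUnit_iff_isUnit_det A).mp hinv
  have hAAinv : A * A⁻¹ = 1 := Matrix.mul_nonsing_inv A hdet
  have hAinvA : A⁻¹ * A = 1 := Matrix.nonsing_inv_mul A hdet
  have hΛA : Λ * A = A * Λ := by
    rw [hA]; simp [mul_add, add_mul, Matrix.mul_smul, Matrix.smul_mul]
  have hcommΛA : Commute Λ A := hΛA
  -- A * M = B
  have hAM : A * M = B := by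
    have h1 : A * (Λ * A⁻¹) = Λ := by
      rw [← Matrix.mul_assoc, ← hΛA, Matrix.mul_assoc, hAAinv, mul_one]
    rw [hM, mul_sub, mul_one, Matrix.mul_smul, h1, hA, hB]
    module
  -- key identity
  have key : ∀ m : ℕ, 1 ≤ m →
      A * M ^ m = B - Δτ • (Λ * ∑ k ∈ Finset.Ico 1 m, M ^ k) := by
    intro m hm
    induction m with
    | zero => omega
    | succ m ih =>
      rcases Nat.eq_or_lt_of_le hm with h1 | h1
      · have : m = 0 := by omega
        subst this
        simp [hAM]
      · have hm1 : 1 ≤ m := by omega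
        have ihm := ih hm1
        rw [Finset.sum_Ico_succ_top hm1, mul_add, smul_add, ← sub_sub, ← ihm]
        have hBM : B * M ^ m = A * M ^ m - Δτ • (Λ * M ^ m) := by
          rw [hA, hB]
          simp only [Matrix.add_mul, Matrix.sub_mul, Matrix.smul_mul, one_mul]
          module
        calc A * M ^ (m + 1) = (A * M) * M ^ m := by
              rw [Matrix.mul_assoc, ← pow_succ']
          _ = A * M ^ m - Δτ • (Λ * M ^ m) := by rw [hAM, hBM]
  -- exponential commutation facts
  have hexpA : ∀ t : ℝ, Commute (NormedSpace.exp (t • Λ)) A := by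
    intro t
    exact (hcommΛA.smul_left t).exp_left
  clear_value A B
  have hexp_mul : ∀ k ∈ Finset.Ico 1 n,
      NormedSpace.exp ((((n : ℝ) - (k : ℝ)) * Δτ) • Λ) *
        NormedSpace.exp (((k : ℝ) * Δτ) • Λ) =
      NormedSpace.exp (((n : ℝ) * Δτ) • Λ) := by
    intro k _
    have hc : Commute ((((n : ℝ) - (k : ℝ)) * Δτ) • Λ) (((k : ℝ) * Δτ) • Λ) :=
      ((Commute.refl Λ).smul_left _).smul_right _
    have h := Matrix.exp_add_of_commute _ _ hc
    have hs : ((((n : ℝ) - (k : ℝ)) * Δτ) • Λ) + (((k : ℝ) * Δτ) • Λ) =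
        ((n : ℝ) * Δτ) • Λ := by rw [← add_smul]; ring_nf
    rw [← h, hs]
  -- rewrite each term in the sum
  have hsum : (∑ k ∈ Finset.Ico 1 n,
      (NormedSpace.exp ((((n : ℝ) - (k : ℝ)) * Δτ) • Λ)).mulVec (Mhat k)) =
      ((NormedSpace.exp (((n : ℝ) * Δτ) • Λ)) *
        ∑ k ∈ Finset.Ico 1 n, M ^ k).mulVec M₀ := by
    rw [Finset.mul_sum]
    rw [show ((∑ k ∈ Finset.Ico 1 n, NormedSpace.exp (((n : ℝ) * Δτ) • Λ) * M ^ k).mulVec M₀)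
      = ∑ k ∈ Finset.Ico 1 n,
        (NormedSpace.exp (((n : ℝ) * Δτ) • Λ) * M ^ k).mulVec M₀ from
      map_sum (Matrix.mulVec.addMonoidHomLeft M₀) _ _]
    refine Finset.sum_congr rfl fun k hk => ?_
    rw [hMhat k, Matrix.mulVec_mulVec, ← Matrix.mul_assoc, hexp_mul k hk]
  have hmain : NormedSpace.exp (((n : ℝ) * Δτ) • Λ) * M ^ n =
      A⁻¹ * (NormedSpace.exp (((n : ℝ) * Δτ) • Λ) * B -
        Δτ • (Λ * (NormedSpace.exp (((n : ℝ) * Δτ) • Λ) *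
          ∑ k ∈ Finset.Ico 1 n, M ^ k))) := by
    set E := NormedSpace.exp (((n : ℝ) * Δτ) • Λ) with hE
    have hΛE : Λ * E = E * Λ := (((Commute.refl Λ).smul_right _).exp_right).eq
    have hEA : E * A = A * E := hexpA _
    clear_value E
    have h1 : E * B - Δτ • (Λ * (E * ∑ k ∈ Finset.Ico 1 n, M ^ k)) =
        E * (B - Δτ • (Λ * ∑ k ∈ Finset.Ico 1 n, M ^ k)) := by
      rw [mul_sub, Matrix.mul_smul, ← Matrix.mul_assoc, hΛE, Matrix.mul_assoc]
    rw [h1, ← key n hn, ← Matrix.mul_assoc E A (M ^ n), hEA,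
      Matrix.mul_assoc A E (M ^ n), Matrix.nonsing_inv_mul_cancel_left _ _ hdet]
  rw [hMhat n, hsum]
  simp only [Matrix.mulVec_mulVec, ← Matrix.smul_mulVec, ← Matrix.sub_mulVec]
  rw [hmain]
end

section
/- Let Λ be a real n×n matrix and Δτ > 0 a step size such that I + (Δτ/2)Λ is invertible. If a sequence of vectors (M̂_n)_{n≥0} in ℝⁿ satisfies the discretized Volterra memory equation M̂_n = (I + (Δτ/2)Λ)⁻¹·( exp(n·Δτ·Λ)·(I − (Δτ/2)Λ)·M̂₀ − Δτ·Λ·Σ_{k=1}^{n−1} exp((n−k)·Δτ·Λ)·M̂_k ) for every integer n ≥ 1, then it satisfies the recurrence M̂_n = exp(Δτ·Λ)·M(Λ)·M̂_{n−1} for every n ≥ 1. -/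
private lemma mulVec_sum' {d : ℕ} {ι : Type*} (s : Finset ι)
    (A : Matrix (Fin d) (Fin d) ℝ) (f : ι → Fin d → ℝ) :
    A.mulVec (∑ i ∈ s, f i) = ∑ i ∈ s, A.mulVec (f i) := by
  simp only [← Matrix.mulVecLin_apply, map_sum]

private lemma commute_exp' {d : ℕ} (X Y : Matrix (Fin d) (Fin d) ℝ) (h : Commute X Y) :
    Commute X (NormedSpace.exp Y) := by
  letI : SeminormedRing (Matrix (Fin d) (Fin d) ℝ) := Matrix.linftyOpSemiNormedRing
  letI : NormedRing (Matrix (Fin d) (Fin d) ℝ) := Matrix.linftyOpNormedRing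
  letI : NormedAlgebra ℝ (Matrix (Fin d) (Fin d) ℝ) := Matrix.linftyOpNormedAlgebra
  exact h.exp_right

/-- If a sequence of vectors `(M̂ₙ)` satisfies the discretized Volterra memory equation
`M̂ₙ = (I + (Δτ/2) Λ)⁻¹ (exp (n Δτ Λ) (I - (Δτ/2) Λ) M̂₀
        - Δτ Λ ∑_{k=1}^{n-1} exp ((n - k) Δτ Λ) M̂ₖ)` for every `n ≥ 1`, then it satisfies
the recurrence `M̂ₙ = exp (Δτ Λ) (M Λ) M̂_{n-1}` for every `n ≥ 1`, where
`M Λ = I - Δτ Λ (I + (Δτ/2) Λ)⁻¹`. -/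
theorem discretized_volterra_implies_recurrence {d : ℕ}
    (Λ : Matrix (Fin d) (Fin d) ℝ) (Δτ : ℝ) (hΔτ : 0 < Δτ)
    (hinv : IsUnit ((1 : Matrix (Fin d) (Fin d) ℝ) + (Δτ / 2) • Λ))
    (M : Matrix (Fin d) (Fin d) ℝ)
    (hM : M = (1 : Matrix (Fin d) (Fin d) ℝ) -
        Δτ • (Λ * ((1 : Matrix (Fin d) (Fin d) ℝ) + (Δτ / 2) • Λ)⁻¹))
    (Mhat : ℕ → Fin d → ℝ)
    (hMhat : ∀ n : ℕ, 1 ≤ n →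
      Mhat n =
        (((1 : Matrix (Fin d) (Fin d) ℝ) + (Δτ / 2) • Λ)⁻¹).mulVec
          ((NormedSpace.exp (((n : ℝ) * Δτ) • Λ) *
              ((1 : Matrix (Fin d) (Fin d) ℝ) - (Δτ / 2) • Λ)).mulVec (Mhat 0) -
            Δτ • Λ.mulVec
              (∑ k ∈ Finset.Ico 1 n,
                (NormedSpace.exp ((((n : ℝ) - (k : ℝ)) * Δτ) • Λ)).mulVec (Mhat k)))) :
    ∀ n : ℕ, 1 ≤ n →
      Mhat n = (NormedSpace.exp (Δτ • Λ) * M).mulVec (Mhat (n - 1)) := by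
  set A : Matrix (Fin d) (Fin d) ℝ := 1 + (Δτ / 2) • Λ with hA
  set B : Matrix (Fin d) (Fin d) ℝ := 1 - (Δτ / 2) • Λ with hB
  have hdet : IsUnit A.det := (Matrix.isUnit_iff_isUnit_det A).mp hinv
  have hAAinv : A * A⁻¹ = 1 := Matrix.mul_nonsing_inv A hdet
  have hAinvA : A⁻¹ * A = 1 := Matrix.nonsing_inv_mul A hdet
  have hΛA : Commute Λ A := by
    simp only [Commute, SemiconjBy, hA, mul_add, add_mul, mul_one, one_mul,
      Algebra.mul_smul_comm, Algebra.smul_mul_assoc]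
  have hΛAinv : Commute Λ A⁻¹ := by
    show Λ * A⁻¹ = A⁻¹ * Λ
    calc Λ * A⁻¹ = 1 * (Λ * A⁻¹) := (one_mul _).symm
      _ = A⁻¹ * (A * Λ) * A⁻¹ := by rw [← hAinvA]; simp only [mul_assoc]
      _ = A⁻¹ * (Λ * A) * A⁻¹ := by rw [← hΛA.eq]
      _ = A⁻¹ * Λ := by simp only [mul_assoc, hAAinv, mul_one]
  have hAB : A - Δτ • Λ = B := by
    rw [hA, hB]; module
  -- the exponential commutes with `Λ`, `A`, `A⁻¹`
  have hcommAinvE : ∀ c : ℝ, A⁻¹ * NormedSpace.exp (c • Λ) =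
      NormedSpace.exp (c • Λ) * A⁻¹ :=
    fun c => commute_exp' A⁻¹ (c • Λ) (hΛAinv.symm.smul_right c)
  have hcommΛE : ∀ c : ℝ, Λ * NormedSpace.exp (c • Λ) =
      NormedSpace.exp (c • Λ) * Λ :=
    fun c => commute_exp' Λ (c • Λ) ((Commute.refl Λ).smul_right c)
  have hexpadd : ∀ a b : ℝ, NormedSpace.exp ((a + b) • Λ) =
      NormedSpace.exp (a • Λ) * NormedSpace.exp (b • Λ) := by
    intro a b
    rw [add_smul]
    exact Matrix.exp_add_of_commute _ _ (((Commute.refl Λ).smul_left a).smul_right b)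
  -- key matrix identity
  have hAinvB : A⁻¹ * B = M := by
    rw [← hAB, mul_sub, hAinvA, Matrix.mul_smul, ← hΛAinv, hM]
  have key : ∀ c : ℝ, A⁻¹ * (NormedSpace.exp (c • Λ) * B) =
      NormedSpace.exp (c • Λ) * M := by
    intro c
    rw [← mul_assoc, hcommAinvE c, mul_assoc, hAinvB]
  intro n hn
  obtain ⟨m, rfl⟩ : ∃ m, n = m + 1 := ⟨n - 1, (Nat.succ_pred_eq_of_pos hn).symm⟩
  simp only [Nat.add_sub_cancel]
  rcases Nat.eq_zero_or_pos m with hm0 | hm1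
  · subst hm0
    rw [hMhat 1 le_rfl]
    simp only [Finset.Ico_self, Finset.sum_empty, Matrix.mulVec_zero, smul_zero, sub_zero,
      Nat.cast_one, one_mul, Matrix.mulVec_mulVec, ← mul_assoc]
    rw [mul_assoc A⁻¹, key Δτ]
  · -- inductive-style step: use the equation at `m + 1` and at `m`
    have hSm : A.mulVec (Mhat m) =
        (NormedSpace.exp (((m : ℝ) * Δτ) • Λ) * B).mulVec (Mhat 0) -
          Δτ • Λ.mulVec (∑ k ∈ Finset.Ico 1 m,
            (NormedSpace.exp ((((m : ℝ) - (k : ℝ)) * Δτ) • Λ)).mulVec (Mhat k)) := by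
      rw [hMhat m hm1, Matrix.mulVec_mulVec, hAAinv, Matrix.one_mulVec]
    rw [hMhat (m + 1) (by omega)]
    have hsum : (∑ k ∈ Finset.Ico 1 (m + 1),
        (NormedSpace.exp ((((((m : ℕ) + 1 : ℕ) : ℝ) - (k : ℝ)) * Δτ) • Λ)).mulVec (Mhat k)) =
        (NormedSpace.exp (Δτ • Λ)).mulVec
          ((∑ k ∈ Finset.Ico 1 m,
            (NormedSpace.exp ((((m : ℝ) - (k : ℝ)) * Δτ) • Λ)).mulVec (Mhat k)) + Mhat m) := by
      rw [Finset.sum_Ico_succ_top hm1, Matrix.mulVec_add, mulVec_sum', Finset.sum_congr rfl]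
      · congr 1
        have : ((((m : ℕ) + 1 : ℕ) : ℝ) - (m : ℝ)) * Δτ = Δτ := by push_cast; ring
        rw [this]
      · intro k hk
        have : ((((m : ℕ) + 1 : ℕ) : ℝ) - (k : ℝ)) * Δτ = Δτ + ((m : ℝ) - (k : ℝ)) * Δτ := by
          push_cast; ring
        rw [this, hexpadd, ← Matrix.mulVec_mulVec]
    rw [hsum]
    have h1 : (((m : ℕ) + 1 : ℕ) : ℝ) * Δτ = Δτ + (m : ℝ) * Δτ := by push_cast; ring
    rw [h1, hexpadd]
    set E := NormedSpace.exp (Δτ • Λ) with hE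
    set e := NormedSpace.exp (((m : ℝ) * Δτ) • Λ) with he
    set Ssum := ∑ k ∈ Finset.Ico 1 m,
        (NormedSpace.exp ((((m : ℝ) - (k : ℝ)) * Δτ) • Λ)).mulVec (Mhat k) with hSsum
    have hcEΛ : Λ * E = E * Λ := hcommΛE Δτ
    have key' : A⁻¹ * (E * B) = E * M := key Δτ
    have harg : (E * e * B).mulVec (Mhat 0) -
        Δτ • Λ.mulVec (E.mulVec (Ssum + Mhat m)) = (E * B).mulVec (Mhat m) := by
      have h2 : Δτ • Λ.mulVec (E.mulVec (Ssum + Mhat m)) =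
          E.mulVec (Δτ • Λ.mulVec (Ssum + Mhat m)) := by
        rw [Matrix.mulVec_mulVec, hcEΛ, ← Matrix.mulVec_mulVec]
        exact (Matrix.mulVec_smul _ _ _).symm
      have h3 : (E * e * B).mulVec (Mhat 0) = E.mulVec ((e * B).mulVec (Mhat 0)) := by
        rw [mul_assoc, ← Matrix.mulVec_mulVec]
      rw [h2, h3, ← Matrix.mulVec_sub]
      refine (congrArg (Matrix.mulVec E) ?_).trans (Matrix.mulVec_mulVec ..)
      rw [Matrix.mulVec_add, smul_add, sub_add_eq_sub_sub, ← hSm, ← hAB,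
        Matrix.sub_mulVec, Matrix.smul_mulVec]
    rw [harg, Matrix.mulVec_mulVec, key']
end
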